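/- Let k ≥ 1 and d ≤ k. Let p ∈ ℂ[x] be a polynomial of degree exactly k, let n = ⌈(k+1)/d⌉, and let a₁, …, aₙ ∈ ℂ be distinct. Then the polynomials ∂ₓⁱ(p(x + aₗ)) for 1 ≤ ℓ ≤ n and 0 ≤ i < d span the space ℂ[x]_{≤k} of polynomials of degree at most k. -/
import Mathlib

open Polynomial

namespace Stmt0Aux

noncomputable def F (k : ℕ) (lam : Polynomial ℂ →ₗ[ℂ] ℂ) (r : Polynomial ℂ) : Polynomial ℂ :=
  ∑ n ∈ Finset.range (k + 1), lam (X ^ n) • hasseDeriv n r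

lemma lam_eq (k : ℕ) (lam : Polynomial ℂ →ₗ[ℂ] ℂ) (q : Polynomial ℂ) (hq : q.natDegree ≤ k) :
    lam q = ∑ n ∈ Finset.range (k + 1), q.coeff n * lam (X ^ n) := by
  conv_lhs => rw [q.as_sum_range' (k + 1) (Nat.lt_succ_of_le hq)]
  rw [map_sum]
  refine Finset.sum_congr rfl fun n _ => ?_
  rw [← smul_X_eq_monomial, map_smul, smul_eq_mul]

lemma F_eval (k : ℕ) (lam : Polynomial ℂ →ₗ[ℂ] ℂ) (r : Polynomial ℂ) (hr : r.natDegree ≤ k)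
    (x : ℂ) : (F k lam r).eval x = lam (r.comp (X + C x)) := by
  rw [← taylor_apply, lam_eq k lam _ (by rw [natDegree_taylor]; exact hr)]
  rw [F, eval_finset_sum]
  refine Finset.sum_congr rfl fun n _ => ?_
  rw [eval_smul, taylor_coeff, smul_eq_mul, mul_comm]

lemma hasse_comm (n : ℕ) (r : Polynomial ℂ) :
    derivative (hasseDeriv n r) = hasseDeriv n (derivative r) := by
  have h1 := LinearMap.congr_fun (hasseDeriv_comp (R := ℂ) 1 n) r
  have h2 := LinearMap.congr_fun (hasseDeriv_comp (R := ℂ) n 1) r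
  simp only [LinearMap.comp_apply, hasseDeriv_one, LinearMap.smul_apply] at h1 h2
  rw [h1, h2, Nat.choose_one_right, Nat.choose_succ_self_right, add_comm]

lemma F_derivative (k : ℕ) (lam : Polynomial ℂ →ₗ[ℂ] ℂ) (r : Polynomial ℂ) :
    derivative (F k lam r) = F k lam (derivative r) := by
  rw [F, F, map_sum]
  exact Finset.sum_congr rfl fun n _ => by rw [derivative_smul, hasse_comm]

lemma F_iter (k : ℕ) (lam : Polynomial ℂ →ₗ[ℂ] ℂ) (r : Polynomial ℂ) (i : ℕ) :
    derivative^[i] (F k lam r) = F k lam (derivative^[i] r) := by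
  induction i with
  | zero => rfl
  | succ i ih =>
    rw [Function.iterate_succ_apply', Function.iterate_succ_apply', ih, F_derivative]

lemma comp_iter (r : Polynomial ℂ) (x : ℂ) (i : ℕ) :
    derivative^[i] (r.comp (X + C x)) = (derivative^[i] r).comp (X + C x) := by
  induction i with
  | zero => rfl
  | succ i ih =>
    rw [Function.iterate_succ_apply', ih, derivative_comp, Function.iterate_succ_apply']
    simp

lemma F_natDegree (k : ℕ) (lam : Polynomial ℂ →ₗ[ℂ] ℂ) (r : Polynomial ℂ)
    (hr : r.natDegree ≤ k) : (F k lam r).natDegree ≤ k := by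
  refine natDegree_sum_le_of_forall_le _ _ fun n _ => ?_
  exact (natDegree_smul_le _ _).trans ((natDegree_hasseDeriv_le r n).trans (by omega))

lemma key (k d : ℕ) (hk : 1 ≤ k) (hd1 : 1 ≤ d) (hd : d ≤ k)
    (p : Polynomial ℂ) (hp : p.natDegree = k)
    (a : Fin ((k + d) / d) → ℂ) (ha : Function.Injective a)
    (lam : Polynomial ℂ →ₗ[ℂ] ℂ)
    (H : ∀ (ℓ : Fin ((k + d) / d)) (i : ℕ), i < d →
      lam (derivative^[i] (p.comp (X + C (a ℓ)))) = 0) :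
    ∀ n ≤ k, lam (X ^ n) = 0 := by
  have hple : p.natDegree ≤ k := hp.le
  have hF0 : F k lam p = 0 := by
    by_contra hF
    have hdvd : ∀ ℓ, (X - C (a ℓ)) ^ d ∣ F k lam p := by
      intro ℓ
      have hroot : ∀ m ≤ d - 1, (derivative^[m] (F k lam p)).IsRoot (a ℓ) := by
        intro m hm
        rw [IsRoot, F_iter,
          F_eval k lam _ ((natDegree_iterate_derivative p m).trans (by omega)),
          ← comp_iter]
        exact H ℓ m (by omega)
      have hfac : ((d - 1).factorial : ℂ) ≠ 0 := by
        exact_mod_cast Nat.factorial_ne_zero _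
      have hlt : d - 1 < rootMultiplicity (a ℓ) (F k lam p) :=
        lt_rootMultiplicity_of_isRoot_iterate_derivative_of_mem_nonZeroDivisors hF hroot
          (mem_nonZeroDivisors_of_ne_zero hfac)
      exact dvd_trans (pow_dvd_pow _ (by omega)) (pow_rootMultiplicity_dvd _ _)
    have hprod : (∏ ℓ : Fin ((k + d) / d), (X - C (a ℓ)) ^ d) ∣ F k lam p :=
      Finset.prod_dvd_of_coprime
        (fun i _ j _ hij => ((pairwise_coprime_X_sub_C ha) hij).pow)
        (fun ℓ _ => hdvd ℓ)
    have hdeg := natDegree_le_of_dvd hprod hF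
    rw [natDegree_prod _ _ (fun i _ => pow_ne_zero d (X_sub_C_ne_zero (a i)))] at hdeg
    simp only [natDegree_pow, natDegree_X_sub_C, mul_one, Finset.sum_const,
      Finset.card_univ, Fintype.card_fin, smul_eq_mul] at hdeg
    have hFk : (F k lam p).natDegree ≤ k := F_natDegree k lam p hple
    have hnd : k + 1 ≤ ((k + d) / d) * d := by
      have h := Nat.lt_div_mul_add (a := k + d) (show 0 < d by omega)
      have : k < (k + d) / d * d := lt_of_add_lt_add_right h
      omega
    have : k + 1 ≤ k := hnd.trans (hdeg.trans hFk)
    omega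
  intro n
  induction n using Nat.strong_induction_on with
  | _ n ih =>
    intro hn
    have hcoeff := congrArg (fun q => coeff q (k - n)) hF0
    simp only [F, finset_sum_coeff, coeff_smul, hasseDeriv_coeff, coeff_zero,
      smul_eq_mul] at hcoeff
    rw [Finset.sum_eq_single_of_mem n (Finset.mem_range.mpr (by omega))] at hcoeff
    · rw [show k - n + n = k by omega] at hcoeff
      have h2 : (k.choose n : ℂ) ≠ 0 := Nat.cast_ne_zero.mpr (Nat.choose_pos hn).ne'
      have h3 : p.coeff k ≠ 0 := by
        rw [← hp]
        exact leadingCoeff_ne_zero.mpr (fun h0 => by simp [h0] at hp; omega)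
      rcases mul_eq_zero.mp hcoeff with h | h
      · exact h
      · exact absurd h (mul_ne_zero h2 h3)
    · intro j hj hjne
      rcases lt_or_gt_of_ne hjne with hlt | hgt
      · rw [ih j hlt (by omega), zero_mul]
      · rw [coeff_eq_zero_of_natDegree_lt (by rw [hp]; omega), mul_zero, mul_zero]

lemma span_ge (k d : ℕ) (hk : 1 ≤ k) (hd1 : 1 ≤ d) (hd : d ≤ k)
    (p : Polynomial ℂ) (hp : p.natDegree = k)
    (a : Fin ((k + d) / d) → ℂ) (ha : Function.Injective a)
    (S : Submodule ℂ (Polynomial ℂ))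
    (hgen : ∀ (ℓ : Fin ((k + d) / d)) (i : ℕ), i < d →
      derivative^[i] (p.comp (X + C (a ℓ))) ∈ S) :
    Polynomial.degreeLE ℂ k ≤ S := by
  intro q hq
  by_contra hq'
  have h1 : S.mkQ q ≠ 0 := by
    simpa [Submodule.mkQ_apply, Submodule.Quotient.mk_eq_zero] using hq'
  obtain ⟨φ, hφ⟩ : ∃ φ : Module.Dual ℂ (Polynomial ℂ ⧸ S), φ (S.mkQ q) ≠ 0 := by
    by_contra hc
    push_neg at hc
    exact h1 ((Module.forall_dual_apply_eq_zero_iff ℂ _).mp hc)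
  set lam : Polynomial ℂ →ₗ[ℂ] ℂ := φ.comp S.mkQ with hlam
  have H : ∀ (ℓ : Fin ((k + d) / d)) (i : ℕ), i < d →
      lam (derivative^[i] (p.comp (X + C (a ℓ)))) = 0 := by
    intro ℓ i hi
    have hz : S.mkQ (derivative^[i] (p.comp (X + C (a ℓ)))) = 0 := by
      rw [Submodule.mkQ_apply, Submodule.Quotient.mk_eq_zero]
      exact hgen ℓ i hi
    simp [hlam, hz]
  have hXn := key k d hk hd1 hd p hp a ha lam H
  have hq0 : lam q = 0 := by
    rw [lam_eq k lam q (natDegree_le_iff_degree_le.mpr (mem_degreeLE.mp hq))]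
    exact Finset.sum_eq_zero fun n hn => by
      rw [hXn n (by have := Finset.mem_range.mp hn; omega), mul_zero]
  exact hφ hq0

end Stmt0Aux

theorem stmt_0 (k d : ℕ) (hk : 1 ≤ k) (hd1 : 1 ≤ d) (hd : d ≤ k)
    (p : Polynomial ℂ) (hp : p.natDegree = k)
    (a : Fin ((k + d) / d) → ℂ) (ha : Function.Injective a) :
    Submodule.span ℂ
      {q : Polynomial ℂ | ∃ (ℓ : Fin ((k + d) / d)) (i : ℕ), i < d ∧
        q = derivative^[i] (p.comp (X + C (a ℓ)))} =
      Polynomial.degreeLE ℂ k := by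
  apply le_antisymm
  · rw [Submodule.span_le]
    rintro q ⟨ℓ, i, hi, rfl⟩
    rw [SetLike.mem_coe, mem_degreeLE]
    have h1 : (p.comp (X + C (a ℓ))).natDegree = k := by
      rw [← taylor_apply, natDegree_taylor, hp]
    have h2 : (derivative^[i] (p.comp (X + C (a ℓ)))).natDegree ≤ k :=
      (natDegree_iterate_derivative _ i).trans (by rw [h1]; omega)
    exact degree_le_natDegree.trans (by exact_mod_cast h2)
  · exact Stmt0Aux.span_ge k d hk hd1 hd p hp a ha _
      (fun ℓ i hi => Submodule.subset_span ⟨ℓ, i, hi, rfl⟩)
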